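/- Let Γ, δ ∈ ℂ with Γ ≠ 0 and Γ·conj(δ) ≠ δ·conj(Γ), set α = conj(Γ)/(Γ·conj(δ) − δ·conj(Γ)) and β = conj(δ)/(Γ·conj(δ) − δ·conj(Γ)), and let ω₊ ∈ ℂ be nonzero. Then it is impossible that both Re(β ω₊/(2Γ)) > 0 and Re(δ/(α ω₊)) < 0 hold. Consequently the function φ₀₀(x,y) = exp(−(β ω₊/(2Γ)) x² + (δ/(2α ω₊)) y²) is never square-integrable on ℝ². -/

import Mathlib

open MeasureTheory

/-- Partial derivative in the `x`-direction of a function on `ℝ²`. -/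
noncomputable def pdx (f : ℝ × ℝ → ℂ) : ℝ × ℝ → ℂ := fun p => fderiv ℝ f p (1, 0)

/-- Partial derivative in the `y`-direction of a function on `ℝ²`. -/
noncomputable def pdy (f : ℝ × ℝ → ℂ) : ℝ × ℝ → ℂ := fun p => fderiv ℝ f p (0, 1)

/-- `α = conj(Γ)/(Γ conj(δ) − δ conj(Γ))`. -/
noncomputable def alphaDHO (Γ δ : ℂ) : ℂ :=
  (starRingEnd ℂ) Γ / (Γ * (starRingEnd ℂ) δ - δ * (starRingEnd ℂ) Γ)

/-- `β = conj(δ)/(Γ conj(δ) − δ conj(Γ))`. -/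
noncomputable def betaDHO (Γ δ : ℂ) : ℂ :=
  (starRingEnd ℂ) δ / (Γ * (starRingEnd ℂ) δ - δ * (starRingEnd ℂ) Γ)

/-- `a f = √(ω/2)·[(βx + i(δ/ω)y) f + (Γ/ω) ∂ₓ f − iα ∂_y f]`, with the principal branch
of the complex square root (`cpow`).  Taking the parameters `(Γ, δ, ω₊)` gives `a₊`; taking
the conjugated parameters `(conj Γ, conj δ, ω₋)` gives `a₋`. -/
noncomputable def aDHO (Γ δ ω : ℂ) (f : ℝ × ℝ → ℂ) : ℝ × ℝ → ℂ := fun p =>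
  (ω / 2) ^ ((1 : ℂ) / 2) *
    ((betaDHO Γ δ * (p.1 : ℂ) + Complex.I * (δ / ω) * (p.2 : ℂ)) * f p +
      (Γ / ω) * pdx f p - Complex.I * alphaDHO Γ δ * pdy f p)


/-- `φ₀₀(x,y) = exp(−(β ω/(2Γ)) x² + (δ/(2α ω)) y²)`. -/
noncomputable def phi00DHO (Γ δ ω : ℂ) : ℝ × ℝ → ℂ := fun p =>
  Complex.exp (-(betaDHO Γ δ * ω / (2 * Γ)) * (p.1 : ℂ) ^ 2 +
    (δ / (2 * alphaDHO Γ δ * ω)) * (p.2 : ℂ) ^ 2)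

lemma key_id (Γ δ ω : ℂ) (hΓ : Γ ≠ 0)
    (hΓδ : Γ * (starRingEnd ℂ) δ ≠ δ * (starRingEnd ℂ) Γ) (hω : ω ≠ 0) :
    2 * ((Γ * (starRingEnd ℂ) δ - δ * (starRingEnd ℂ) Γ).im) ^ 2 *
      (betaDHO Γ δ * ω / (2 * Γ)).re
      = Complex.normSq ω * (δ / (alphaDHO Γ δ * ω)).re := by
  set D := Γ * (starRingEnd ℂ) δ - δ * (starRingEnd ℂ) Γ with hDdef
  have hD : D ≠ 0 := sub_ne_zero.mpr hΓδ
  have hDre : D.re = 0 := by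
    simp [hDdef, Complex.sub_re, Complex.mul_re]; ring
  set t : ℝ := D.im with htdef
  have hDval : D = (t : ℝ) * Complex.I := by
    apply Complex.ext <;> simp [hDre, htdef]
  have ht : (t : ℂ) ≠ 0 := by
    intro h
    apply hD
    rw [hDval, h, zero_mul]
  have hΓ' : (starRingEnd ℂ) Γ ≠ 0 := by simpa using hΓ
  have hω' : (starRingEnd ℂ) ω ≠ 0 := by simpa using hω
  have hid : 2 * (t : ℂ) ^ 2 * (betaDHO Γ δ * ω / (2 * Γ))
      = ((Complex.normSq ω : ℝ) : ℂ) * (starRingEnd ℂ) (δ / (alphaDHO Γ δ * ω)) := by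
    rw [Complex.normSq_eq_conj_mul_self]
    unfold betaDHO alphaDHO
    rw [← hDdef, hDval]
    simp only [map_div₀, map_mul, Complex.conj_conj, Complex.conj_I, Complex.conj_ofReal]
    field_simp
    linear_combination ((starRingEnd ℂ) δ) *
      Complex.I_mul_I
  have hL : 2 * (t : ℂ) ^ 2 * (betaDHO Γ δ * ω / (2 * Γ))
      = ((2 * t ^ 2 : ℝ) : ℂ) * (betaDHO Γ δ * ω / (2 * Γ)) := by push_cast; ring
  rw [hL] at hid
  have h2 := congrArg Complex.re hid
  rw [Complex.re_ofReal_mul, Complex.re_ofReal_mul, Complex.conj_re] at h2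
  linarith

lemma not_integrable_exp_sq {a : ℝ} (ha : 0 ≤ a) :
    ¬ Integrable (fun x : ℝ => Real.exp (a * x ^ 2)) volume := by
  intro h
  have h1 : Integrable (fun _ : ℝ => (1 : ℝ)) volume := by
    refine Integrable.mono h aestronglyMeasurable_const ?_
    filter_upwards with x
    rw [Real.norm_eq_abs, Real.norm_eq_abs, abs_one, Real.abs_exp]
    exact Real.one_le_exp (by positivity)
  rcases integrable_const_iff.mp h1 with h2 | h2
  · exact one_ne_zero h2
  · have h3 := h2.measure_univ_lt_top; simp [Real.volume_univ] at h3

theorem statement19 (Γ δ ω : ℂ) (hΓ : Γ ≠ 0)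
    (hΓδ : Γ * (starRingEnd ℂ) δ ≠ δ * (starRingEnd ℂ) Γ) (hω : ω ≠ 0) :
    ¬(0 < (betaDHO Γ δ * ω / (2 * Γ)).re ∧ (δ / (alphaDHO Γ δ * ω)).re < 0) ∧
    ¬ MemLp (phi00DHO Γ δ ω) 2 (volume : Measure (ℝ × ℝ)) := by
  have hkey := key_id Γ δ ω hΓ hΓδ hω
  have hnω : 0 < Complex.normSq ω := Complex.normSq_pos.mpr hω
  set a : ℝ := (betaDHO Γ δ * ω / (2 * Γ)).re with ha_def
  set b : ℝ := (δ / (alphaDHO Γ δ * ω)).re with hb_def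
  have h1 : ¬(0 < a ∧ b < 0) := by
    rintro ⟨hA, hB⟩
    nlinarith [sq_nonneg ((Γ * (starRingEnd ℂ) δ - δ * (starRingEnd ℂ) Γ).im)]
  refine ⟨h1, ?_⟩
  intro hmem
  -- real part of the second coefficient
  have hc : (δ / (2 * alphaDHO Γ δ * ω)).re = b / 2 := by
    have : δ / (2 * alphaDHO Γ δ * ω) = δ / (alphaDHO Γ δ * ω) * (1 / 2 : ℂ) := by
      ring
    rw [this]
    simp [Complex.mul_re]
    rw [← hb_def]; ring
  -- squared norm of phi00
  have hnorm : (fun p : ℝ × ℝ => ‖phi00DHO Γ δ ω p‖ ^ 2)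
      = fun p : ℝ × ℝ => Real.exp (-2 * a * p.1 ^ 2) * Real.exp (b * p.2 ^ 2) := by
    funext p
    rw [show phi00DHO Γ δ ω p = Complex.exp (-(betaDHO Γ δ * ω / (2 * Γ)) * (p.1 : ℂ) ^ 2 +
        (δ / (2 * alphaDHO Γ δ * ω)) * (p.2 : ℂ) ^ 2) from rfl]
    rw [Complex.norm_exp, ← Real.exp_add, sq, ← Real.exp_add]
    congr 1
    have hre : (-(betaDHO Γ δ * ω / (2 * Γ)) * (p.1 : ℂ) ^ 2 +
        (δ / (2 * alphaDHO Γ δ * ω)) * (p.2 : ℂ) ^ 2).re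
        = -a * p.1 ^ 2 + (b / 2) * p.2 ^ 2 := by
      simp only [Complex.add_re, Complex.neg_re, ← Complex.ofReal_pow, Complex.mul_re,
        Complex.ofReal_re, Complex.ofReal_im, mul_zero, sub_zero, hc, ← ha_def]
    rw [hre]; ring
  have hint : Integrable (fun p : ℝ × ℝ => ‖phi00DHO Γ δ ω p‖ ^ 2) volume :=
    (memLp_two_iff_integrable_sq_norm hmem.aestronglyMeasurable).mp hmem
  rw [hnorm, Measure.volume_eq_prod] at hint
  rcases not_and_or.mp h1 with hA | hB
  · -- a ≤ 0 : slices in x are not integrable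
    push_neg at hA
    have hsl := hint.prod_left_ae
    obtain ⟨y, hy⟩ := hsl.exists
    have hy' : Integrable (fun x : ℝ => Real.exp (-2 * a * x ^ 2)) volume := by
      have := hy.mul_const (Real.exp (b * y ^ 2))⁻¹
      simpa [mul_assoc, mul_inv_cancel₀ (Real.exp_ne_zero (b * y ^ 2))] using this
    exact not_integrable_exp_sq (by linarith) hy'
  · -- 0 ≤ b : slices in y are not integrable
    push_neg at hB
    have hsl := hint.prod_right_ae
    obtain ⟨x, hx⟩ := hsl.exists
    have hx' : Integrable (fun y : ℝ => Real.exp (b * y ^ 2)) volume := by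
      have := hx.const_mul (Real.exp (-2 * a * x ^ 2))⁻¹
      simpa [← mul_assoc, inv_mul_cancel₀ (Real.exp_ne_zero (-2 * a * x ^ 2))] using this
    exact not_integrable_exp_sq hB hx'
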